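/- arXiv:1603.03466 — 3 statements merged into one kernel-verified Lean document; each statement's English description precedes it below -/
import Mathlib

section
/- Let 0 < α < mn, s > 1 with 1/s + 1/s' = 1 and 1 ≤ s' < mn/α, and let Ω be homogeneous of degree zero on ℝ^{mn} with Ω ∈ L^s(S^{mn-1}). Then there is a constant C > 0 such that for all locally integrable f₁,…,f_m on ℝⁿ and all x ∈ ℝⁿ, M_{Ω,α}^{(m)}(f₁,…,f_m)(x) ≤ C · [M_{αs'}^{(m)}(|f₁|^{s'},…,|f_m|^{s'})(x)]^{1/s'}. -/
open MeasureTheory ENNReal NNReal BigOperators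

noncomputable section

abbrev En (n : ℕ) : Type := EuclideanSpace ℝ (Fin n)

/-- `|y⃗| = |y₁| + ⋯ + |y_m|`. -/
def vnorm {m n : ℕ} (y : Fin m → En n) : ℝ := ∑ i, ‖y i‖

/-- Rough multi-sublinear fractional maximal operator `M_{Ω,β}^{(m)}`. -/
def MRmax (m n : ℕ) (Ω : (Fin m → En n) → ℝ) (β : ℝ)
    (f : Fin m → (En n → ℝ)) (x : En n) : ℝ≥0∞ :=
  ⨆ (r : ℝ) (_ : 0 < r),
    ENNReal.ofReal r ^ (β - (m * n : ℝ)) *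
      ∫⁻ y in {y : Fin m → En n | vnorm y < r},
        ENNReal.ofReal (|Ω y| * ∏ i, |f i (x - y i)|)

/-- Rough multilinear fractional integral `I_{Ω,α}^{(m)}` (Bochner integral). -/
def IRint (m n : ℕ) (Ω : (Fin m → En n) → ℝ) (α : ℝ)
    (f : Fin m → (En n → ℝ)) (x : En n) : ℝ :=
  ∫ y : Fin m → En n, (Ω y / vnorm y ^ ((m * n : ℝ) - α)) * ∏ i, f i (x - y i)

/-- Kenig–Stein multilinear fractional integral of the absolute values (lower integral). -/
def ILint (m n : ℕ) (α : ℝ) (f : Fin m → (En n → ℝ)) (x : En n) : ℝ≥0∞ :=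
  ∫⁻ y : Fin m → En n,
    ENNReal.ofReal (vnorm y ^ (α - (m * n : ℝ)) * ∏ i, |f i (x - y i)|)

/-- Homogeneity of degree zero. -/
def HomogZero {m n : ℕ} (Ω : (Fin m → En n) → ℝ) : Prop :=
  ∀ t : ℝ, 0 < t → ∀ y, Ω (t • y) = Ω y

/-- `Ω ∈ L^s(S^{mn-1})`, expressed (equivalently, for `Ω` homogeneous of degree zero)
as `s`-integrability on the unit ball of the norm `vnorm`. -/
def SphereLs (m n : ℕ) (s : ℝ) (Ω : (Fin m → En n) → ℝ) : Prop :=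
  (∫⁻ y in {y : Fin m → En n | vnorm y < 1}, ENNReal.ofReal (|Ω y| ^ s)) < ⊤

/-- Axis-parallel cubes in `ℝⁿ`. -/
def RCube {n : ℕ} (Q : Set (En n)) : Prop :=
  ∃ (a : En n) (h : ℝ), 0 < h ∧ Q = {x : En n | ∀ j, a j ≤ x j ∧ x j ≤ a j + h}

/-- Average of `w` over `Q`. -/
def cubeAvg {n : ℕ} (Q : Set (En n)) (w : En n → ℝ) : ℝ :=
  ((volume Q).toReal)⁻¹ * ∫ x in Q, w x

/-- Hölder conjugate exponent. -/
def rconj (P : ℝ) : ℝ := P / (P - 1)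

/-- Muckenhoupt–Wheeden class `A_{P,Q}` for one weight. -/
def MWclass (n : ℕ) (P Qe : ℝ) (w : En n → ℝ) : Prop :=
  ∃ C > 0, ∀ Q : Set (En n), RCube Q →
    (cubeAvg Q fun x => w x ^ Qe) ^ (1 / Qe) *
      (cubeAvg Q fun x => w x ^ (-(rconj P))) ^ (1 / rconj P) ≤ C

/-- Radial Muckenhoupt–Wheeden class `A_{P,Q}^β` for a pair of weights. -/
def RadialApq (n : ℕ) (P Qe β : ℝ) (u v : En n → ℝ) : Prop :=
  ∃ C > 0, ∀ Q : Set (En n), RCube Q →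
    (1 < P →
      (volume Q).toReal ^ (1 / Qe + β / n - 1 / P) * (cubeAvg Q u) ^ (1 / Qe) *
        (cubeAvg Q fun x => v x ^ (1 - rconj P)) ^ (1 / rconj P) ≤ C) ∧
    (P = 1 → ∀ᵐ x ∂(volume.restrict Q),
      (volume Q).toReal ^ (1 / Qe + β / n - 1) * (cubeAvg Q u) ^ (1 / Qe) ≤ C * v x)

/-- Two-weight `A_P` condition. -/
def PairAp (n : ℕ) (P : ℝ) (u v : En n → ℝ) : Prop :=
  ∃ C > 0, ∀ Q : Set (En n), RCube Q →
    (1 < P →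
      cubeAvg Q u * (cubeAvg Q fun x => v x ^ (1 - rconj P)) ^ (P - 1) ≤ C) ∧
    (P = 1 → ∀ᵐ x ∂(volume.restrict Q), cubeAvg Q u ≤ C * v x)

section Aux

lemma continuous_vnorm {m n : ℕ} : Continuous (vnorm (m := m) (n := n)) :=
  continuous_finset_sum _ fun i _ => (continuous_apply i).norm

lemma measurableSet_vball {m n : ℕ} (r : ℝ) :
    MeasurableSet {y : Fin m → En n | vnorm y < r} :=
  (isOpen_lt continuous_vnorm continuous_const).measurableSet

lemma vnorm_smul {m n : ℕ} {c : ℝ} (hc : 0 ≤ c) (y : Fin m → En n) :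
    vnorm (c • y) = c * vnorm y := by
  simp [vnorm, norm_smul, abs_of_nonneg hc, Finset.mul_sum]

instance haarPi (m n : ℕ) :
    Measure.IsAddHaarMeasure (volume : Measure (Fin m → En n)) :=
  Measure.pi.isAddHaarMeasure _

lemma finrank_pi_En (m n : ℕ) : Module.finrank ℝ (Fin m → En n) = m * n := by
  simp [Module.finrank_pi_fintype, finrank_euclideanSpace_fin]

/-- Scaling identity for the integral of `|Ω|^s` over `vnorm`-balls. -/
lemma scaling_lemma {m n : ℕ} (Ω : (Fin m → En n) → ℝ) (hΩmeas : Measurable Ω)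
    (hhom : HomogZero Ω) (s : ℝ) {r : ℝ} (hr : 0 < r) :
    (∫⁻ y in {y : Fin m → En n | vnorm y < r}, ENNReal.ofReal (|Ω y| ^ s))
      = ENNReal.ofReal r ^ ((m : ℝ) * n) *
        ∫⁻ y in {y : Fin m → En n | vnorm y < 1}, ENNReal.ofReal (|Ω y| ^ s) := by
  have hbase : Measurable fun y : Fin m → En n => ENNReal.ofReal (|Ω y| ^ s) :=
    ENNReal.measurable_ofReal.comp (hΩmeas.abs.pow measurable_const)
  set g : (Fin m → En n) → ℝ≥0∞ :=
    Set.indicator {y : Fin m → En n | vnorm y < 1}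
      (fun y => ENNReal.ofReal (|Ω y| ^ s)) with hg
  have hgm : Measurable g := hbase.indicator (measurableSet_vball 1)
  have key : ∀ y : Fin m → En n,
      g (r⁻¹ • y) = Set.indicator {y : Fin m → En n | vnorm y < r}
        (fun y => ENNReal.ofReal (|Ω y| ^ s)) y := by
    intro y
    have h1 : vnorm (r⁻¹ • y) < 1 ↔ vnorm y < r := by
      rw [vnorm_smul (inv_nonneg.2 hr.le), inv_mul_eq_div, div_lt_one hr]
    have h2 : Ω (r⁻¹ • y) = Ω y := hhom r⁻¹ (inv_pos.2 hr) y
    by_cases hy : vnorm y < r <;>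
      simp [hg, Set.indicator, h1, h2, hy]
  have hd : Module.finrank ℝ (Fin m → En n) = m * n := finrank_pi_En m n
  calc
    (∫⁻ y in {y : Fin m → En n | vnorm y < r}, ENNReal.ofReal (|Ω y| ^ s))
        = ∫⁻ y, Set.indicator {y : Fin m → En n | vnorm y < r}
            (fun y => ENNReal.ofReal (|Ω y| ^ s)) y := by
          rw [lintegral_indicator (measurableSet_vball r) _]
    _ = ∫⁻ y, g (r⁻¹ • y) := by simp_rw [key]
    _ = ∫⁻ z, g z ∂(Measure.map (r⁻¹ • · : (Fin m → En n) → _) volume) := by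
          rw [lintegral_map hgm (measurable_const_smul r⁻¹)]
    _ = ENNReal.ofReal |((r⁻¹) ^ Module.finrank ℝ (Fin m → En n))⁻¹| * ∫⁻ z, g z := by
          rw [Measure.map_addHaar_smul volume (inv_ne_zero hr.ne'), lintegral_smul_measure, smul_eq_mul]
    _ = ENNReal.ofReal r ^ ((m : ℝ) * n) *
          ∫⁻ y in {y : Fin m → En n | vnorm y < 1}, ENNReal.ofReal (|Ω y| ^ s) := by
          rw [hg, lintegral_indicator (measurableSet_vball 1) _]
          congr 1
          rw [hd, inv_pow, inv_inv, abs_of_nonneg (pow_nonneg hr.le _),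
            ENNReal.ofReal_pow hr.le, ← ENNReal.rpow_natCast]
          norm_cast
end Aux

/-- pointwise bound of the rough maximal operator by the smooth one. -/
theorem stmt0 (m n : ℕ) (hm : 1 ≤ m) (hn : 1 ≤ n) (α s s' : ℝ)
    (hα0 : 0 < α) (hα : α < m * n) (hs : 1 < s) (hss' : 1 / s + 1 / s' = 1)
    (hs'1 : 1 ≤ s') (hs' : s' < m * n / α)
    (Ω : (Fin m → En n) → ℝ) (hΩmeas : Measurable Ω)
    (hhom : HomogZero Ω) (hΩ : SphereLs m n s Ω) :
    ∃ C : ℝ≥0, 0 < C ∧ ∀ (f : Fin m → (En n → ℝ)),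
      (∀ i, LocallyIntegrable (f i) volume) → ∀ x : En n,
      MRmax m n Ω α f x ≤
        C * (MRmax m n (fun _ => 1) (α * s') (fun i z => |f i z| ^ s') x) ^ (1 / s') := by
  have hs0 : (0:ℝ) < s := lt_trans one_pos hs
  have hs'0 : (0:ℝ) < s' := lt_of_lt_of_le one_pos hs'1
  have hsne : s ≠ 0 := hs0.ne'
  have hs'ne : s' ≠ 0 := hs'0.ne'
  have hconj : Real.HolderConjugate s s' := ⟨by simpa [one_div] using hss', hs0, hs'0⟩
  set K : ℝ≥0∞ := ∫⁻ y in {y : Fin m → En n | vnorm y < 1}, ENNReal.ofReal (|Ω y| ^ s)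
    with hKdef
  have hKlt : K < ⊤ := hΩ
  set Ctop : ℝ≥0∞ := K ^ (1/s) with hCtopdef
  have hCtop_ne_top : Ctop ≠ ⊤ :=
    ENNReal.rpow_ne_top_of_nonneg (one_div_nonneg.2 hs0.le) hKlt.ne
  refine ⟨Ctop.toNNReal + 1, by positivity, ?_⟩
  have hCtople : Ctop ≤ ((Ctop.toNNReal + 1 : ℝ≥0) : ℝ≥0∞) := by
    rw [ENNReal.coe_add, ENNReal.coe_toNNReal hCtop_ne_top]
    exact le_self_add
  intro f hf x
  -- measurability of the translated functions
  have hqmp : ∀ i : Fin m,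
      Measure.QuasiMeasurePreserving (fun y : Fin m → En n => x - y i) volume volume := by
    intro i
    have h1 : Measure.QuasiMeasurePreserving (fun y : Fin m → En n => y i) volume volume := by
      refine ⟨measurable_pi_apply i, Measure.AbsolutelyContinuous.mk fun sN hsm hs0' => ?_⟩
      rw [Measure.map_apply (measurable_pi_apply i) hsm]
      exact Measure.pi_eval_preimage_null _ hs0'
    exact ((Measure.measurePreserving_sub_left volume x).quasiMeasurePreserving).comp h1
  have hprod_meas : AEMeasurable (fun y : Fin m → En n => ∏ i, |f i (x - y i)|) volume :=
    Finset.aemeasurable_fun_prod _ fun i _ =>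
      (measurable_abs.comp_aemeasurable
        (((hf i).aestronglyMeasurable.aemeasurable).comp_quasiMeasurePreserving (hqmp i)))
  rw [MRmax]
  refine iSup₂_le fun r hr => ?_
  set S : Set (Fin m → En n) := {y | vnorm y < r} with hSdef
  set μ : Measure (Fin m → En n) := volume.restrict S with hμdef
  set x₀ : ℝ≥0∞ := ENNReal.ofReal r with hx₀def
  set F1 : (Fin m → En n) → ℝ≥0∞ := fun y => ENNReal.ofReal (|Ω y|) with hF1def
  set F2 : (Fin m → En n) → ℝ≥0∞ :=
    fun y => ENNReal.ofReal (∏ i, |f i (x - y i)|) with hF2def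
  set B : ℝ≥0∞ := ∫⁻ y in S, ENNReal.ofReal (∏ i, |f i (x - y i)| ^ s') with hBdef
  have hF1 : AEMeasurable F1 μ := (ENNReal.measurable_ofReal.comp hΩmeas.abs).aemeasurable
  have hF2 : AEMeasurable F2 μ :=
    (ENNReal.measurable_ofReal.comp_aemeasurable hprod_meas).restrict
  have holder := ENNReal.lintegral_mul_le_Lp_mul_Lq μ hconj hF1 hF2
  have h1 : (∫⁻ y, F1 y ^ s ∂μ) = x₀ ^ ((m:ℝ) * n) * K := by
    have heq : (∫⁻ y, F1 y ^ s ∂μ)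
        = ∫⁻ y in S, ENNReal.ofReal (|Ω y| ^ s) :=
      lintegral_congr fun y =>
        ENNReal.ofReal_rpow_of_nonneg (abs_nonneg _) hs0.le
    rw [heq, hSdef]
    exact scaling_lemma Ω hΩmeas hhom s hr
  have h2 : (∫⁻ y, F2 y ^ s' ∂μ) = B := by
    refine lintegral_congr fun y => ?_
    rw [hF2def, ENNReal.ofReal_rpow_of_nonneg (Finset.prod_nonneg fun i _ => abs_nonneg _)
      hs'0.le, ← Real.finset_prod_rpow _ _ (fun i _ => abs_nonneg _)]
  have hIeq : (∫⁻ y in S, ENNReal.ofReal (|Ω y| * ∏ i, |f i (x - y i)|))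
      = ∫⁻ y, (F1 * F2) y ∂μ :=
    lintegral_congr fun y => by
      rw [Pi.mul_apply, hF1def, hF2def, ← ENNReal.ofReal_mul (abs_nonneg _)]
  have hexp : (α - (m * n : ℝ)) + ((m:ℝ) * n) * (1/s) = (α * s' - (m * n : ℝ)) * (1/s') := by
    have h1' : (1:ℝ)/s' = 1 - 1/s := by linarith
    have h2' : s' * (1/s') = 1 := mul_one_div_cancel hs'ne
    calc (α - (m * n : ℝ)) + ((m:ℝ) * n) * (1/s)
        = α - ((m:ℝ) * n) * (1 - 1/s) := by ring
      _ = α * (s' * (1/s')) - ((m:ℝ) * n) * (1/s') := by rw [h2', ← h1']; ring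
      _ = (α * s' - (m * n : ℝ)) * (1/s') := by ring
  have halg : x₀ ^ (α - (m * n : ℝ)) * ((x₀ ^ ((m:ℝ) * n) * K) ^ (1/s) * B ^ (1/s'))
      = Ctop * (x₀ ^ (α * s' - (m * n : ℝ)) * B) ^ (1/s') := by
    have hx0 : x₀ ≠ 0 := (ENNReal.ofReal_pos.2 hr).ne'
    have hx0t : x₀ ≠ ⊤ := ENNReal.ofReal_ne_top
    rw [hCtopdef, ENNReal.mul_rpow_of_nonneg _ _ (one_div_nonneg.2 hs0.le),
      ENNReal.mul_rpow_of_nonneg _ _ (one_div_nonneg.2 hs'0.le),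
      ← ENNReal.rpow_mul, ← ENNReal.rpow_mul, ← hexp, ENNReal.rpow_add _ _ hx0 hx0t]
    ring
  have hB : x₀ ^ (α * s' - (m * n : ℝ)) * B
      ≤ MRmax m n (fun _ => 1) (α * s') (fun i z => |f i z| ^ s') x := by
    rw [MRmax]
    have heq : (∫⁻ y in {y : Fin m → En n | vnorm y < r},
        ENNReal.ofReal (|(1:ℝ)| * ∏ i, abs (|f i (x - y i)| ^ s'))) = B := by
      rw [hBdef, hSdef]
      exact lintegral_congr fun y => by
        simp [abs_of_nonneg (Real.rpow_nonneg (abs_nonneg _) _)]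
    calc x₀ ^ (α * s' - (m * n : ℝ)) * B
        = x₀ ^ (α * s' - (m * n : ℝ)) *
          ∫⁻ y in {y : Fin m → En n | vnorm y < r},
            ENNReal.ofReal (|(1:ℝ)| * ∏ i, abs (|f i (x - y i)| ^ s')) := by rw [heq]
      _ ≤ _ := le_iSup₂ (f := fun (r' : ℝ) (_ : 0 < r') =>
          ENNReal.ofReal r' ^ (α * s' - (m * n : ℝ)) *
            ∫⁻ y in {y : Fin m → En n | vnorm y < r'},
              ENNReal.ofReal (|(1:ℝ)| * ∏ i, abs (|f i (x - y i)| ^ s'))) r hr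
  calc x₀ ^ (α - (m * n : ℝ)) *
        ∫⁻ y in S, ENNReal.ofReal (|Ω y| * ∏ i, |f i (x - y i)|)
      ≤ x₀ ^ (α - (m * n : ℝ)) * ((x₀ ^ ((m:ℝ) * n) * K) ^ (1/s) * B ^ (1/s')) := by
        refine mul_le_mul_right ?_ _
        rw [hIeq, ← h1, ← h2]
        exact holder
    _ = Ctop * (x₀ ^ (α * s' - (m * n : ℝ)) * B) ^ (1/s') := halg
    _ ≤ Ctop * (MRmax m n (fun _ => 1) (α * s') (fun i z => |f i z| ^ s') x) ^ (1/s') :=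
        mul_le_mul_right (ENNReal.rpow_le_rpow hB (one_div_nonneg.2 hs'0.le)) _
    _ ≤ ((Ctop.toNNReal + 1 : ℝ≥0) : ℝ≥0∞) *
        (MRmax m n (fun _ => 1) (α * s') (fun i z => |f i z| ^ s') x) ^ (1/s') :=
        mul_le_mul_left hCtople _
end
end

section
/- Let 0 < α < mn and let Ω be homogeneous of degree zero on ℝ^{mn} with Ω locally integrable. For any 0 < ε < min{α, mn − α} there exists a constant C > 0 such that for all f₁,…,f_m and all x ∈ ℝⁿ, |I_{Ω,α}^{(m)}(f⃗)(x)| ≤ C · [M_{Ω,α+ε}^{(m)}(f⃗)(x)]^{1/2} · [M_{Ω,α−ε}^{(m)}(f⃗)(x)]^{1/2}. -/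
open MeasureTheory ENNReal NNReal BigOperators

noncomputable section

lemma vnorm_nonneg {m n : ℕ} (y : Fin m → En n) : 0 ≤ vnorm y :=
  Finset.sum_nonneg fun i _ => norm_nonneg _

lemma measurable_vnorm {m n : ℕ} : Measurable (vnorm (m := m) (n := n)) := by
  unfold vnorm
  exact Finset.measurable_sum _ fun i _ => (measurable_pi_apply i).norm

lemma coeff_ne_zero {r e : ℝ} (hr : 0 < r) : ENNReal.ofReal r ^ e ≠ 0 := by
  simp [ENNReal.rpow_eq_zero_iff, ENNReal.ofReal_eq_zero, hr.not_ge]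

lemma twopow_calc {r : ℝ} (hr : 0 < r) (u v a b : ℝ) :
    ((2:ℝ) ^ u * r) ^ a * ((2:ℝ) ^ v * r) ^ b = (2:ℝ) ^ (u*a + v*b) * r ^ (a+b) := by
  rw [Real.mul_rpow (Real.rpow_nonneg (by norm_num) _) hr.le,
      Real.mul_rpow (Real.rpow_nonneg (by norm_num) _) hr.le,
      ← Real.rpow_mul (by norm_num : (0:ℝ) ≤ 2), ← Real.rpow_mul (by norm_num : (0:ℝ) ≤ 2),
      show (2:ℝ)^(u*a) * r^a * ((2:ℝ)^(v*b) * r^b)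
        = ((2:ℝ)^(u*a) * (2:ℝ)^(v*b)) * (r^a * r^b) by ring,
      ← Real.rpow_add (by norm_num : (0:ℝ) < 2), ← Real.rpow_add hr]

lemma ball_int_le (m n : ℕ) (Ω : (Fin m → En n) → ℝ) (β : ℝ)
    (f : Fin m → (En n → ℝ)) (x : En n) {r : ℝ} (hr : 0 < r) :
    (∫⁻ y in {y : Fin m → En n | vnorm y < r},
        ENNReal.ofReal (|Ω y| * ∏ i, |f i (x - y i)|)) ≤
      ENNReal.ofReal r ^ ((m * n : ℝ) - β) * MRmax m n Ω β f x := by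
  set I := ∫⁻ y in {y : Fin m → En n | vnorm y < r},
        ENNReal.ofReal (|Ω y| * ∏ i, |f i (x - y i)|) with hI
  have h0 : ENNReal.ofReal r ≠ 0 := by simp [hr.not_ge]
  have ht : ENNReal.ofReal r ≠ ⊤ := ENNReal.ofReal_ne_top
  have h : ENNReal.ofReal r ^ (β - (m*n:ℝ)) * I ≤ MRmax m n Ω β f x := by
    rw [MRmax]
    exact le_iSup₂ (f := fun (r' : ℝ) (_ : 0 < r') => ENNReal.ofReal r' ^ (β - (m*n:ℝ)) *
      ∫⁻ y in {y : Fin m → En n | vnorm y < r'},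
        ENNReal.ofReal (|Ω y| * ∏ i, |f i (x - y i)|)) r hr
  calc I = (ENNReal.ofReal r ^ ((m*n:ℝ) - β) * ENNReal.ofReal r ^ (β - (m*n:ℝ))) * I := by
        rw [← ENNReal.rpow_add _ _ h0 ht,
          show (m*n:ℝ) - β + (β - (m*n:ℝ)) = 0 by ring, ENNReal.rpow_zero, one_mul]
    _ = ENNReal.ofReal r ^ ((m*n:ℝ) - β) * (ENNReal.ofReal r ^ (β - (m*n:ℝ)) * I) := by ring
    _ ≤ ENNReal.ofReal r ^ ((m*n:ℝ) - β) * MRmax m n Ω β f x := mul_le_mul_right h _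

lemma shell_int_le (m n : ℕ) (Ω : (Fin m → En n) → ℝ) (α : ℝ)
    (f : Fin m → (En n → ℝ)) (x : En n) {c d : ℝ} (hc : 0 < c)
    (hαmn : α - (m*n:ℝ) ≤ 0) :
    (∫⁻ y in {y : Fin m → En n | c ≤ vnorm y ∧ vnorm y < d},
        ENNReal.ofReal |(Ω y / vnorm y ^ ((m * n : ℝ) - α)) * ∏ i, f i (x - y i)|) ≤
      ENNReal.ofReal (c ^ (α - (m * n : ℝ))) *
        ∫⁻ y in {y : Fin m → En n | vnorm y < d},
          ENNReal.ofReal (|Ω y| * ∏ i, |f i (x - y i)|) := by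
  have hSmeas : MeasurableSet {y : Fin m → En n | c ≤ vnorm y ∧ vnorm y < d} := by
    have : {y : Fin m → En n | c ≤ vnorm y ∧ vnorm y < d} = vnorm ⁻¹' (Set.Ico c d) := rfl
    rw [this]; exact measurable_vnorm measurableSet_Ico
  have hpt : ∀ y ∈ {y : Fin m → En n | c ≤ vnorm y ∧ vnorm y < d},
      ENNReal.ofReal |(Ω y / vnorm y ^ ((m*n:ℝ) - α)) * ∏ i, f i (x - y i)| ≤
      ENNReal.ofReal (c ^ (α - (m*n:ℝ))) * ENNReal.ofReal (|Ω y| * ∏ i, |f i (x - y i)|) := by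
    intro y hy
    have hv : 0 < vnorm y := lt_of_lt_of_le hc hy.1
    rw [← ENNReal.ofReal_mul (Real.rpow_nonneg hc.le _)]
    apply ENNReal.ofReal_le_ofReal
    rw [abs_mul, abs_div, Finset.abs_prod, abs_of_nonneg (Real.rpow_nonneg hv.le _),
      div_eq_mul_inv, ← Real.rpow_neg hv.le, neg_sub]
    calc |Ω y| * vnorm y ^ (α - (m*n:ℝ)) * ∏ i, |f i (x - y i)|
        = vnorm y ^ (α - (m*n:ℝ)) * (|Ω y| * ∏ i, |f i (x - y i)|) := by ring
      _ ≤ c ^ (α - (m*n:ℝ)) * (|Ω y| * ∏ i, |f i (x - y i)|) :=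
          mul_le_mul_of_nonneg_right (Real.rpow_le_rpow_of_nonpos hc hy.1 hαmn)
            (mul_nonneg (abs_nonneg _) (Finset.prod_nonneg fun i _ => abs_nonneg _))
  calc (∫⁻ y in {y : Fin m → En n | c ≤ vnorm y ∧ vnorm y < d},
        ENNReal.ofReal |(Ω y / vnorm y ^ ((m * n : ℝ) - α)) * ∏ i, f i (x - y i)|)
      ≤ ∫⁻ y in {y : Fin m → En n | c ≤ vnorm y ∧ vnorm y < d},
          ENNReal.ofReal (c ^ (α - (m*n:ℝ))) * ENNReal.ofReal (|Ω y| * ∏ i, |f i (x - y i)|) :=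
        lintegral_mono_ae ((ae_restrict_iff' hSmeas).2 (ae_of_all _ hpt))
    _ = ENNReal.ofReal (c ^ (α - (m*n:ℝ))) *
          ∫⁻ y in {y : Fin m → En n | c ≤ vnorm y ∧ vnorm y < d},
            ENNReal.ofReal (|Ω y| * ∏ i, |f i (x - y i)|) :=
        lintegral_const_mul' _ _ ENNReal.ofReal_ne_top
    _ ≤ ENNReal.ofReal (c ^ (α - (m*n:ℝ))) *
          ∫⁻ y in {y : Fin m → En n | vnorm y < d},
            ENNReal.ofReal (|Ω y| * ∏ i, |f i (x - y i)|) :=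
        mul_le_mul_right (lintegral_mono_set fun y hy => hy.2) _

lemma MRmax_eq_zero (m n : ℕ) (Ω : (Fin m → En n) → ℝ) (β β' : ℝ)
    (f : Fin m → (En n → ℝ)) (x : En n)
    (h : MRmax m n Ω β f x = 0) : MRmax m n Ω β' f x = 0 := by
  have hball : ∀ r : ℝ, 0 < r → (∫⁻ y in {y : Fin m → En n | vnorm y < r},
      ENNReal.ofReal (|Ω y| * ∏ i, |f i (x - y i)|)) = 0 := by
    intro r hr
    have hle : ENNReal.ofReal r ^ (β - (m*n:ℝ)) * (∫⁻ y in {y : Fin m → En n | vnorm y < r},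
        ENNReal.ofReal (|Ω y| * ∏ i, |f i (x - y i)|)) ≤ 0 := by
      rw [← h, MRmax]
      exact le_iSup₂ (f := fun (r' : ℝ) (_ : 0 < r') => ENNReal.ofReal r' ^ (β - (m*n:ℝ)) *
        ∫⁻ y in {y : Fin m → En n | vnorm y < r'},
          ENNReal.ofReal (|Ω y| * ∏ i, |f i (x - y i)|)) r hr
    rcases mul_eq_zero.1 (le_antisymm hle zero_le) with h1 | h2
    · exact absurd h1 (coeff_ne_zero hr)
    · exact h2
  rw [MRmax]
  apply le_antisymm _ zero_le
  refine iSup₂_le fun r hr => ?_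
  rw [hball r hr, mul_zero]

lemma welland_optimize (L A B c : ℝ≥0∞) (ε : ℝ) (hε : 0 < ε) (hc : c ≠ ⊤)
    (hAB : A = 0 → B = 0) (hBA : B = 0 → A = 0)
    (h : ∀ r : ℝ, 0 < r →
      L ≤ c * (ENNReal.ofReal (r ^ ε) * A + ENNReal.ofReal (r ^ (-ε)) * B)) :
    L ≤ 2 * c * B ^ ((1:ℝ)/2) * A ^ ((1:ℝ)/2) := by
  rcases eq_or_ne A 0 with hA | hA
  · have hB := hAB hA
    have h1 := h 1 one_pos
    simp only [hA, hB, mul_zero, add_zero, zero_add] at h1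
    exact le_trans h1 (by simp)
  rcases eq_or_ne B 0 with hB | hB
  · exact absurd (hBA hB) hA
  rcases eq_or_ne c 0 with hc0 | hc0
  · have h1 := h 1 one_pos
    simp only [hc0, zero_mul] at h1
    exact le_trans h1 zero_le
  have h2c : (2:ℝ≥0∞) * c ≠ 0 := by simp [hc0]
  have hBhalf : B ^ ((1:ℝ)/2) ≠ 0 := by
    simp [ENNReal.rpow_eq_zero_iff, hB]
  have hAhalf : A ^ ((1:ℝ)/2) ≠ 0 := by
    simp [ENNReal.rpow_eq_zero_iff, hA]
  rcases eq_or_ne A ⊤ with hAt | hAt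
  · have : 2 * c * B ^ ((1:ℝ)/2) * A ^ ((1:ℝ)/2) = ⊤ := by
      rw [hAt, ENNReal.top_rpow_of_pos (by norm_num), ENNReal.mul_top
        (mul_ne_zero h2c hBhalf)]
    rw [this]; exact le_top
  rcases eq_or_ne B ⊤ with hBt | hBt
  · have : 2 * c * B ^ ((1:ℝ)/2) * A ^ ((1:ℝ)/2) = ⊤ := by
      rw [hBt, ENNReal.top_rpow_of_pos (by norm_num), ENNReal.mul_top h2c,
        ENNReal.top_mul hAhalf]
    rw [this]; exact le_top
  set a := A.toReal with hadef
  set b := B.toReal with hbdef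
  have ha : 0 < a := ENNReal.toReal_pos hA hAt
  have hb : 0 < b := ENNReal.toReal_pos hB hBt
  have hA' : A = ENNReal.ofReal a := (ENNReal.ofReal_toReal hAt).symm
  have hB' : B = ENNReal.ofReal b := (ENNReal.ofReal_toReal hBt).symm
  set r := (b / a) ^ (1 / (2 * ε)) with hrdef
  have hr : 0 < r := Real.rpow_pos_of_pos (div_pos hb ha) _
  have haa : a ^ ((1:ℝ)/2) * a ^ ((1:ℝ)/2) = a := by
    rw [← Real.rpow_add ha]; norm_num
  have hbb : b ^ ((1:ℝ)/2) * b ^ ((1:ℝ)/2) = b := by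
    rw [← Real.rpow_add hb]; norm_num
  have hre : r ^ ε = b ^ ((1:ℝ)/2) / a ^ ((1:ℝ)/2) := by
    rw [hrdef, ← Real.rpow_mul (div_pos hb ha).le,
      show 1 / (2*ε) * ε = (1:ℝ)/2 by field_simp,
      Real.div_rpow hb.le ha.le]
  have hrne : r ^ (-ε) = a ^ ((1:ℝ)/2) / b ^ ((1:ℝ)/2) := by
    rw [Real.rpow_neg hr.le, hre, inv_div]
  have key := h r hr
  have e1 : ENNReal.ofReal (r ^ ε) * A = ENNReal.ofReal (b ^ ((1:ℝ)/2) * a ^ ((1:ℝ)/2)) := by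
    rw [hre, hA', ← ENNReal.ofReal_mul (by positivity)]
    congr 1
    field_simp
    linear_combination -haa
  have e2 : ENNReal.ofReal (r ^ (-ε)) * B = ENNReal.ofReal (b ^ ((1:ℝ)/2) * a ^ ((1:ℝ)/2)) := by
    rw [hrne, hB', ← ENNReal.ofReal_mul (by positivity)]
    congr 1
    field_simp
    linear_combination -hbb
  rw [e1, e2, ← two_mul] at key
  refine le_trans key (le_of_eq ?_)
  rw [hA', hB', ENNReal.ofReal_rpow_of_pos hb, ENNReal.ofReal_rpow_of_pos ha,
    ENNReal.ofReal_mul (by positivity)]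
  ring




lemma welland_key (m n : ℕ) (Ω : (Fin m → En n) → ℝ) (α ε : ℝ)
    (hα0 : 0 < α) (hα : α < m * n) (hε0 : 0 < ε) (hεmn : ε < (m*n:ℝ) - α)
    (f : Fin m → (En n → ℝ)) (x : En n) {r : ℝ} (hr : 0 < r) :
    (∫⁻ y, ENNReal.ofReal |(Ω y / vnorm y ^ ((m*n:ℝ) - α)) * ∏ i, f i (x - y i)|) ≤
      ((1 - ENNReal.ofReal ((2:ℝ) ^ (-ε)))⁻¹ * ENNReal.ofReal ((2:ℝ) ^ ((m*n:ℝ)))) *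
        (ENNReal.ofReal (r ^ ε) * MRmax m n Ω (α - ε) f x
          + ENNReal.ofReal (r ^ (-ε)) * MRmax m n Ω (α + ε) f x) := by
  have hαmn : α - (m*n:ℝ) ≤ 0 := by linarith
  set q : ℝ≥0∞ := ENNReal.ofReal ((2:ℝ) ^ (-ε)) with hqdef
  -- zero set
  have hZ : (∫⁻ y in {y : Fin m → En n | vnorm y ≤ 0},
      ENNReal.ofReal |(Ω y / vnorm y ^ ((m*n:ℝ) - α)) * ∏ i, f i (x - y i)|) = 0 := by
    have hmeas : MeasurableSet {y : Fin m → En n | vnorm y ≤ 0} :=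
      measurable_vnorm measurableSet_Iic
    apply le_antisymm _ zero_le
    refine le_trans (lintegral_mono_ae ((ae_restrict_iff' hmeas).2 (ae_of_all _ ?_)))
      (le_of_eq lintegral_zero)
    intro y hy
    have hv : vnorm y = 0 := le_antisymm hy (vnorm_nonneg y)
    have h0 : vnorm y ^ ((m*n:ℝ) - α) = 0 := by
      rw [hv]; exact Real.zero_rpow (sub_ne_zero_of_ne hα.ne')
    simp [h0]
  -- positive shells
  have hpos : ∀ k : ℕ,
      (∫⁻ y in {y : Fin m → En n |
          (2:ℝ) ^ ((k:ℝ)) * r ≤ vnorm y ∧ vnorm y < (2:ℝ) ^ ((k:ℝ)+1) * r},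
        ENNReal.ofReal |(Ω y / vnorm y ^ ((m*n:ℝ) - α)) * ∏ i, f i (x - y i)|)
        ≤ q ^ k * (ENNReal.ofReal ((2:ℝ) ^ ((m*n:ℝ)) * r ^ (-ε)) * MRmax m n Ω (α + ε) f x) := by
    intro k
    have hc : 0 < (2:ℝ) ^ ((k:ℝ)) * r := mul_pos (Real.rpow_pos_of_pos two_pos _) hr
    have hd : 0 < (2:ℝ) ^ ((k:ℝ)+1) * r := mul_pos (Real.rpow_pos_of_pos two_pos _) hr
    calc (∫⁻ y in {y : Fin m → En n |
            (2:ℝ) ^ ((k:ℝ)) * r ≤ vnorm y ∧ vnorm y < (2:ℝ) ^ ((k:ℝ)+1) * r},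
          ENNReal.ofReal |(Ω y / vnorm y ^ ((m*n:ℝ) - α)) * ∏ i, f i (x - y i)|)
        ≤ ENNReal.ofReal (((2:ℝ) ^ ((k:ℝ)) * r) ^ (α - (m*n:ℝ))) *
            ∫⁻ y in {y : Fin m → En n | vnorm y < (2:ℝ) ^ ((k:ℝ)+1) * r},
              ENNReal.ofReal (|Ω y| * ∏ i, |f i (x - y i)|) :=
          shell_int_le m n Ω α f x hc hαmn
      _ ≤ ENNReal.ofReal (((2:ℝ) ^ ((k:ℝ)) * r) ^ (α - (m*n:ℝ))) *
            (ENNReal.ofReal ((2:ℝ) ^ ((k:ℝ)+1) * r) ^ ((m*n:ℝ) - (α+ε)) *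
              MRmax m n Ω (α + ε) f x) :=
          mul_le_mul_right (ball_int_le m n Ω (α+ε) f x hd) _
      _ = ENNReal.ofReal ((((2:ℝ) ^ ((k:ℝ)) * r) ^ (α - (m*n:ℝ))) *
            (((2:ℝ) ^ ((k:ℝ)+1) * r) ^ ((m*n:ℝ) - (α+ε)))) * MRmax m n Ω (α + ε) f x := by
          rw [ENNReal.ofReal_rpow_of_pos hd, ← mul_assoc,
            ← ENNReal.ofReal_mul (Real.rpow_nonneg hc.le _)]
      _ ≤ q ^ k * (ENNReal.ofReal ((2:ℝ) ^ ((m*n:ℝ)) * r ^ (-ε)) * MRmax m n Ω (α + ε) f x) := by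
          rw [← mul_assoc]
          refine mul_le_mul_left ?_ _
          have hqk : q ^ k = ENNReal.ofReal ((2:ℝ) ^ ((-ε) * (k:ℝ))) := by
            rw [Real.rpow_mul (by norm_num : (0:ℝ) ≤ 2), Real.rpow_natCast,
              ← ENNReal.ofReal_pow (Real.rpow_nonneg (by norm_num) _)]
          rw [hqk, ← ENNReal.ofReal_mul (Real.rpow_nonneg (by norm_num) _)]
          apply ENNReal.ofReal_le_ofReal
          rw [twopow_calc hr ((k:ℝ)) ((k:ℝ)+1) (α - (m*n:ℝ)) ((m*n:ℝ) - (α+ε)),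
            show (k:ℝ)*(α-(m*n:ℝ)) + ((k:ℝ)+1)*((m*n:ℝ) - (α+ε))
              = (-ε)*(k:ℝ) + ((m*n:ℝ) - α - ε) by ring,
            show (α-(m*n:ℝ)) + ((m*n:ℝ) - (α+ε)) = -ε by ring,
            Real.rpow_add (by norm_num : (0:ℝ) < 2), mul_assoc]
          refine mul_le_mul_of_nonneg_left ?_ (Real.rpow_nonneg (by norm_num) _)
          exact mul_le_mul_of_nonneg_right
            (Real.rpow_le_rpow_of_exponent_le (by norm_num) (by linarith))
            (Real.rpow_nonneg hr.le _)
  -- negative shells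
  have hneg : ∀ k : ℕ,
      (∫⁻ y in {y : Fin m → En n |
          (2:ℝ) ^ (-((k:ℝ)+1)) * r ≤ vnorm y ∧ vnorm y < (2:ℝ) ^ (-(k:ℝ)) * r},
        ENNReal.ofReal |(Ω y / vnorm y ^ ((m*n:ℝ) - α)) * ∏ i, f i (x - y i)|)
        ≤ q ^ k * (ENNReal.ofReal ((2:ℝ) ^ ((m*n:ℝ)) * r ^ ε) * MRmax m n Ω (α - ε) f x) := by
    intro k
    have hc : 0 < (2:ℝ) ^ (-((k:ℝ)+1)) * r := mul_pos (Real.rpow_pos_of_pos two_pos _) hr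
    have hd : 0 < (2:ℝ) ^ (-(k:ℝ)) * r := mul_pos (Real.rpow_pos_of_pos two_pos _) hr
    calc (∫⁻ y in {y : Fin m → En n |
            (2:ℝ) ^ (-((k:ℝ)+1)) * r ≤ vnorm y ∧ vnorm y < (2:ℝ) ^ (-(k:ℝ)) * r},
          ENNReal.ofReal |(Ω y / vnorm y ^ ((m*n:ℝ) - α)) * ∏ i, f i (x - y i)|)
        ≤ ENNReal.ofReal (((2:ℝ) ^ (-((k:ℝ)+1)) * r) ^ (α - (m*n:ℝ))) *
            ∫⁻ y in {y : Fin m → En n | vnorm y < (2:ℝ) ^ (-(k:ℝ)) * r},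
              ENNReal.ofReal (|Ω y| * ∏ i, |f i (x - y i)|) :=
          shell_int_le m n Ω α f x hc hαmn
      _ ≤ ENNReal.ofReal (((2:ℝ) ^ (-((k:ℝ)+1)) * r) ^ (α - (m*n:ℝ))) *
            (ENNReal.ofReal ((2:ℝ) ^ (-(k:ℝ)) * r) ^ ((m*n:ℝ) - (α-ε)) *
              MRmax m n Ω (α - ε) f x) :=
          mul_le_mul_right (ball_int_le m n Ω (α-ε) f x hd) _
      _ = ENNReal.ofReal ((((2:ℝ) ^ (-((k:ℝ)+1)) * r) ^ (α - (m*n:ℝ))) *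
            (((2:ℝ) ^ (-(k:ℝ)) * r) ^ ((m*n:ℝ) - (α-ε)))) * MRmax m n Ω (α - ε) f x := by
          rw [ENNReal.ofReal_rpow_of_pos hd, ← mul_assoc,
            ← ENNReal.ofReal_mul (Real.rpow_nonneg hc.le _)]
      _ ≤ q ^ k * (ENNReal.ofReal ((2:ℝ) ^ ((m*n:ℝ)) * r ^ ε) * MRmax m n Ω (α - ε) f x) := by
          rw [← mul_assoc]
          refine mul_le_mul_left ?_ _
          have hqk : q ^ k = ENNReal.ofReal ((2:ℝ) ^ ((-ε) * (k:ℝ))) := by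
            rw [Real.rpow_mul (by norm_num : (0:ℝ) ≤ 2), Real.rpow_natCast,
              ← ENNReal.ofReal_pow (Real.rpow_nonneg (by norm_num) _)]
          rw [hqk, ← ENNReal.ofReal_mul (Real.rpow_nonneg (by norm_num) _)]
          apply ENNReal.ofReal_le_ofReal
          rw [twopow_calc hr (-((k:ℝ)+1)) (-(k:ℝ)) (α - (m*n:ℝ)) ((m*n:ℝ) - (α-ε)),
            show (-((k:ℝ)+1))*(α-(m*n:ℝ)) + (-(k:ℝ))*((m*n:ℝ) - (α-ε))
              = (-ε)*(k:ℝ) + ((m*n:ℝ) - α) by ring,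
            show (α-(m*n:ℝ)) + ((m*n:ℝ) - (α-ε)) = ε by ring,
            Real.rpow_add (by norm_num : (0:ℝ) < 2), mul_assoc]
          refine mul_le_mul_of_nonneg_left ?_ (Real.rpow_nonneg (by norm_num) _)
          exact mul_le_mul_of_nonneg_right
            (Real.rpow_le_rpow_of_exponent_le (by norm_num) (by linarith))
            (Real.rpow_nonneg hr.le _)
  -- cover
  have hcover : (Set.univ : Set (Fin m → En n)) ⊆
      ({y : Fin m → En n | vnorm y ≤ 0} ∪
        ⋃ k : ℕ, {y : Fin m → En n |
          (2:ℝ) ^ (-((k:ℝ)+1)) * r ≤ vnorm y ∧ vnorm y < (2:ℝ) ^ (-(k:ℝ)) * r}) ∪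
      ⋃ k : ℕ, {y : Fin m → En n |
          (2:ℝ) ^ ((k:ℝ)) * r ≤ vnorm y ∧ vnorm y < (2:ℝ) ^ ((k:ℝ)+1) * r} := by
    intro y _
    rcases le_or_gt (vnorm y) 0 with h | h
    · exact Or.inl (Or.inl h)
    obtain ⟨z, hz⟩ := exists_mem_Ico_zpow (div_pos h hr) one_lt_two
    have hz1 : (2:ℝ) ^ z * r ≤ vnorm y := (le_div_iff₀ hr).1 hz.1
    have hz2 : vnorm y < (2:ℝ) ^ (z+1) * r := (div_lt_iff₀ hr).1 hz.2
    rcases le_or_gt 0 z with hz0 | hz0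
    · right
      have hcast : ((z.toNat : ℝ)) = ((z : ℤ) : ℝ) := by
        exact_mod_cast congrArg (fun t : ℤ => (t : ℝ)) (Int.toNat_of_nonneg hz0)
      refine Set.mem_iUnion.2 ⟨z.toNat, ?_, ?_⟩
      · rw [show ((2:ℝ) ^ ((z.toNat : ℝ))) = (2:ℝ) ^ z by
          rw [hcast, Real.rpow_intCast]]
        exact hz1
      · rw [show ((2:ℝ) ^ (((z.toNat : ℝ)) + 1)) = (2:ℝ) ^ (z+1) by
          rw [show ((z.toNat : ℝ)) + 1 = (((z+1 : ℤ)) : ℝ) by rw [hcast]; push_cast; ring,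
            Real.rpow_intCast]]
        exact hz2
    · left; right
      have hk : (((-(z+1)).toNat : ℤ)) = -(z+1) := Int.toNat_of_nonneg (by omega)
      have hkR : (((-(z+1)).toNat : ℝ)) = ((-(z+1) : ℤ) : ℝ) := by
        exact_mod_cast congrArg (fun t : ℤ => (t : ℝ)) hk
      refine Set.mem_iUnion.2 ⟨(-(z+1)).toNat, ?_, ?_⟩
      · rw [show ((2:ℝ) ^ (-((((-(z+1)).toNat : ℝ)) + 1))) = (2:ℝ) ^ z by
          rw [show -((((-(z+1)).toNat : ℝ)) + 1) = ((z : ℤ) : ℝ) by rw [hkR]; push_cast; ring,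
            Real.rpow_intCast]]
        exact hz1
      · rw [show ((2:ℝ) ^ (-(((-(z+1)).toNat : ℝ)))) = (2:ℝ) ^ (z+1) by
          rw [show -(((-(z+1)).toNat : ℝ)) = (((z+1 : ℤ)) : ℝ) by rw [hkR]; push_cast; ring,
            Real.rpow_intCast]]
        exact hz2
  -- assemble
  have hsumpos : (∫⁻ y in ⋃ k : ℕ, {y : Fin m → En n |
        (2:ℝ) ^ ((k:ℝ)) * r ≤ vnorm y ∧ vnorm y < (2:ℝ) ^ ((k:ℝ)+1) * r},
      ENNReal.ofReal |(Ω y / vnorm y ^ ((m*n:ℝ) - α)) * ∏ i, f i (x - y i)|)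
      ≤ (1 - q)⁻¹ * (ENNReal.ofReal ((2:ℝ) ^ ((m*n:ℝ)) * r ^ (-ε)) * MRmax m n Ω (α + ε) f x) := by
    refine le_trans (lintegral_iUnion_le _ _) ?_
    refine le_trans (ENNReal.tsum_le_tsum hpos) ?_
    rw [ENNReal.tsum_mul_right, ENNReal.tsum_geometric]
  have hsumneg : (∫⁻ y in ⋃ k : ℕ, {y : Fin m → En n |
        (2:ℝ) ^ (-((k:ℝ)+1)) * r ≤ vnorm y ∧ vnorm y < (2:ℝ) ^ (-(k:ℝ)) * r},
      ENNReal.ofReal |(Ω y / vnorm y ^ ((m*n:ℝ) - α)) * ∏ i, f i (x - y i)|)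
      ≤ (1 - q)⁻¹ * (ENNReal.ofReal ((2:ℝ) ^ ((m*n:ℝ)) * r ^ ε) * MRmax m n Ω (α - ε) f x) := by
    refine le_trans (lintegral_iUnion_le _ _) ?_
    refine le_trans (ENNReal.tsum_le_tsum hneg) ?_
    rw [ENNReal.tsum_mul_right, ENNReal.tsum_geometric]
  calc (∫⁻ y, ENNReal.ofReal |(Ω y / vnorm y ^ ((m*n:ℝ) - α)) * ∏ i, f i (x - y i)|)
      = ∫⁻ y in Set.univ,
          ENNReal.ofReal |(Ω y / vnorm y ^ ((m*n:ℝ) - α)) * ∏ i, f i (x - y i)| := by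
        rw [Measure.restrict_univ]
    _ ≤ ∫⁻ y in ({y : Fin m → En n | vnorm y ≤ 0} ∪
          ⋃ k : ℕ, {y : Fin m → En n |
            (2:ℝ) ^ (-((k:ℝ)+1)) * r ≤ vnorm y ∧ vnorm y < (2:ℝ) ^ (-(k:ℝ)) * r}) ∪
          ⋃ k : ℕ, {y : Fin m → En n |
            (2:ℝ) ^ ((k:ℝ)) * r ≤ vnorm y ∧ vnorm y < (2:ℝ) ^ ((k:ℝ)+1) * r},
          ENNReal.ofReal |(Ω y / vnorm y ^ ((m*n:ℝ) - α)) * ∏ i, f i (x - y i)| :=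
        lintegral_mono_set hcover
    _ ≤ ((∫⁻ y in {y : Fin m → En n | vnorm y ≤ 0},
            ENNReal.ofReal |(Ω y / vnorm y ^ ((m*n:ℝ) - α)) * ∏ i, f i (x - y i)|) +
          ∫⁻ y in ⋃ k : ℕ, {y : Fin m → En n |
            (2:ℝ) ^ (-((k:ℝ)+1)) * r ≤ vnorm y ∧ vnorm y < (2:ℝ) ^ (-(k:ℝ)) * r},
            ENNReal.ofReal |(Ω y / vnorm y ^ ((m*n:ℝ) - α)) * ∏ i, f i (x - y i)|) +
          ∫⁻ y in ⋃ k : ℕ, {y : Fin m → En n |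
            (2:ℝ) ^ ((k:ℝ)) * r ≤ vnorm y ∧ vnorm y < (2:ℝ) ^ ((k:ℝ)+1) * r},
            ENNReal.ofReal |(Ω y / vnorm y ^ ((m*n:ℝ) - α)) * ∏ i, f i (x - y i)| :=
        le_trans (lintegral_union_le _ _ _) (add_le_add_left (lintegral_union_le _ _ _) _)
    _ ≤ ((0 : ℝ≥0∞) +
          (1 - q)⁻¹ * (ENNReal.ofReal ((2:ℝ) ^ ((m*n:ℝ)) * r ^ ε) * MRmax m n Ω (α - ε) f x)) +
          (1 - q)⁻¹ * (ENNReal.ofReal ((2:ℝ) ^ ((m*n:ℝ)) * r ^ (-ε)) * MRmax m n Ω (α + ε) f x) :=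
        add_le_add (add_le_add (le_of_eq hZ) hsumneg) hsumpos
    _ = ((1 - q)⁻¹ * ENNReal.ofReal ((2:ℝ) ^ ((m*n:ℝ)))) *
        (ENNReal.ofReal (r ^ ε) * MRmax m n Ω (α - ε) f x
          + ENNReal.ofReal (r ^ (-ε)) * MRmax m n Ω (α + ε) f x) := by
        rw [zero_add, ENNReal.ofReal_mul (Real.rpow_nonneg (by norm_num) _),
          ENNReal.ofReal_mul (Real.rpow_nonneg (by norm_num) _)]
        ring


/-- Welland's pointwise inequality for the rough multilinear fractional integral. -/
theorem stmt1 (m n : ℕ) (hm : 1 ≤ m) (hn : 1 ≤ n) (α ε : ℝ)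
    (hα0 : 0 < α) (hα : α < m * n) (hε0 : 0 < ε) (hε : ε < min α (m * n - α))
    (Ω : (Fin m → En n) → ℝ) (hΩmeas : Measurable Ω)
    (hΩloc : LocallyIntegrable Ω volume) (hhom : HomogZero Ω) :
    ∃ C : ℝ≥0, 0 < C ∧ ∀ (f : Fin m → (En n → ℝ)) (x : En n),
      ENNReal.ofReal |IRint m n Ω α f x| ≤
        C * (MRmax m n Ω (α + ε) f x) ^ ((1 : ℝ) / 2) *
          (MRmax m n Ω (α - ε) f x) ^ ((1 : ℝ) / 2) := by
  have hεα : ε < α := lt_of_lt_of_le hε (min_le_left _ _)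
  have hεmn : ε < (m*n:ℝ) - α := lt_of_lt_of_le hε (min_le_right _ _)
  set q : ℝ≥0∞ := ENNReal.ofReal ((2:ℝ) ^ (-ε)) with hqdef
  have hq1 : q < 1 := by
    rw [hqdef]
    rw [show (1:ℝ≥0∞) = ENNReal.ofReal 1 by simp]
    exact (ENNReal.ofReal_lt_ofReal_iff one_pos).2
      (Real.rpow_lt_one_of_one_lt_of_neg one_lt_two (neg_lt_zero.2 hε0))
  set c₁ : ℝ≥0∞ := (1 - q)⁻¹ * ENNReal.ofReal ((2:ℝ) ^ ((m*n:ℝ))) with hc1def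
  have hKne : (1 - q)⁻¹ ≠ ⊤ := by
    rw [Ne, ENNReal.inv_eq_top]
    exact fun h => absurd (tsub_eq_zero_iff_le.1 h) hq1.not_ge
  have hK0 : (1 - q)⁻¹ ≠ 0 := by
    rw [Ne, ENNReal.inv_eq_zero]
    exact (lt_of_le_of_lt tsub_le_self one_lt_top).ne
  have hc1ne : c₁ ≠ ⊤ := ENNReal.mul_ne_top hKne ENNReal.ofReal_ne_top
  have hc10 : c₁ ≠ 0 := mul_ne_zero hK0
    (by simp [ENNReal.ofReal_eq_zero, not_le, Real.rpow_pos_of_pos two_pos])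
  refine ⟨(2 * c₁).toNNReal, ?_, ?_⟩
  · exact ENNReal.toNNReal_pos (by simp [hc10]) (by finiteness)
  intro f x
  have hcoe : (((2 * c₁).toNNReal : ℝ≥0) : ℝ≥0∞) = 2 * c₁ :=
    ENNReal.coe_toNNReal (by finiteness)
  rw [hcoe]
  refine le_trans ?_ (welland_optimize
    (∫⁻ y, ENNReal.ofReal |(Ω y / vnorm y ^ ((m*n:ℝ) - α)) * ∏ i, f i (x - y i)|)
    (MRmax m n Ω (α - ε) f x) (MRmax m n Ω (α + ε) f x) c₁ ε hε0 hc1ne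
    (MRmax_eq_zero m n Ω _ _ f x) (MRmax_eq_zero m n Ω _ _ f x)
    (fun r hr => welland_key m n Ω α ε hα0 hα hε0 hεmn f x hr))
  rw [IRint]
  calc ENNReal.ofReal |∫ y : Fin m → En n,
        (Ω y / vnorm y ^ ((m*n:ℝ) - α)) * ∏ i, f i (x - y i)|
      = (‖∫ y : Fin m → En n,
          (Ω y / vnorm y ^ ((m*n:ℝ) - α)) * ∏ i, f i (x - y i)‖ₑ : ℝ≥0∞) :=
        (Real.enorm_eq_ofReal_abs _).symm
    _ ≤ ∫⁻ y, (‖(Ω y / vnorm y ^ ((m*n:ℝ) - α)) * ∏ i, f i (x - y i)‖ₑ : ℝ≥0∞) :=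
        enorm_integral_le_lintegral_enorm _
    _ = ∫⁻ y, ENNReal.ofReal |(Ω y / vnorm y ^ ((m*n:ℝ) - α)) * ∏ i, f i (x - y i)| := by
        simp only [Real.enorm_eq_ofReal_abs]
end
end

section
/- Let 0 < α < mn, δ > 0, and Ω locally integrable and homogeneous of degree zero on ℝ^{mn}. For any 0 < ε < mn − α and any x ∈ ℝⁿ, the 'outer part' satisfies ∫_{|y⃗|>δ} |Ω(y⃗)|/|y⃗|^{mn−α} ∏_{i=1}^m |f_i(x−y_i)| dy⃗ ≤ C δ^{-ε} M_{Ω,α+ε}^{(m)}(f⃗)(x), with C depending only on m, n, α, ε. -/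
open MeasureTheory ENNReal NNReal BigOperators

noncomputable section

/-- dyadic-shell estimate for the outer part of the rough integral. -/
theorem stmt17 (m n : ℕ) (hm : 1 ≤ m) (hn : 1 ≤ n) (α ε : ℝ)
    (hα0 : 0 < α) (hα : α < m * n) (hε0 : 0 < ε) (hε : ε < m * n - α)
    (Ω : (Fin m → En n) → ℝ) (hΩmeas : Measurable Ω)
    (hΩloc : LocallyIntegrable Ω volume) (hhom : HomogZero Ω) :
    ∃ C : ℝ, 0 < C ∧ ∀ δ : ℝ, 0 < δ → ∀ (f : Fin m → (En n → ℝ)) (x : En n),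
      (∫⁻ y in {y : Fin m → En n | δ < vnorm y},
          ENNReal.ofReal (vnorm y ^ (α - (m * n : ℝ)) * |Ω y| * ∏ i, |f i (x - y i)|)) ≤
        ENNReal.ofReal (C * δ ^ (-ε)) * MRmax m n Ω (α + ε) f x := by
  have hq0 : (0:ℝ) < (2:ℝ) ^ (-ε) := Real.rpow_pos_of_pos two_pos _
  have hq1 : (2:ℝ) ^ (-ε) < 1 :=
    Real.rpow_lt_one_of_one_lt_of_neg one_lt_two (neg_lt_zero.mpr hε0)
  set q : ℝ := (2:ℝ) ^ (-ε) with hqdef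
  set A : ℝ := (2:ℝ) ^ ((m * n : ℝ) - α - ε) with hAdef
  have hA0 : 0 < A := Real.rpow_pos_of_pos two_pos _
  refine ⟨A / (1 - q), div_pos hA0 (by linarith), ?_⟩
  intro δ hδ f x
  set M := MRmax m n Ω (α + ε) f x with hM
  set g : (Fin m → En n) → ℝ≥0∞ :=
    fun y => ENNReal.ofReal (|Ω y| * ∏ i, |f i (x - y i)|) with hg
  set c₁ : ℝ := α - (m * n : ℝ) with hc1
  set c₂ : ℝ := (m * n : ℝ) - (α + ε) with hc2
  have hvmeas : Measurable (vnorm : (Fin m → En n) → ℝ) :=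
    (continuous_finset_sum _ fun i _ => (continuous_apply i).norm).measurable
  set S : ℕ → Set (Fin m → En n) :=
    fun j => vnorm ⁻¹' (Set.Ico ((2:ℝ)^j * δ) ((2:ℝ)^(j+1) * δ)) with hS
  have hSmeas : ∀ j, MeasurableSet (S j) := fun j => hvmeas measurableSet_Ico
  -- covering by shells
  have hsub : {y : Fin m → En n | δ < vnorm y} ⊆ ⋃ j, S j := by
    intro y hy
    have hyv : δ < vnorm y := hy
    have ht : (1:ℝ) < vnorm y / δ := (one_lt_div hδ).mpr hyv
    obtain ⟨k, hk1, hk2⟩ :=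
      exists_mem_Ico_zpow (x := vnorm y / δ) (y := (2:ℝ)) (by linarith) one_lt_two
    have hk0 : 0 ≤ k := by
      by_contra h
      push_neg at h
      have hk1' : k + 1 ≤ 0 := by omega
      have : (2:ℝ) ^ (k + 1) ≤ (2:ℝ) ^ (0:ℤ) :=
        zpow_le_zpow_right₀ one_le_two hk1'
      simp only [zpow_zero] at this
      linarith
    refine Set.mem_iUnion.mpr ⟨k.toNat, ?_, ?_⟩
    · have h1 : (2:ℝ) ^ (k.toNat : ℤ) ≤ vnorm y / δ := by
        rwa [Int.toNat_of_nonneg hk0]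
      rw [zpow_natCast] at h1
      calc (2:ℝ)^(k.toNat) * δ ≤ (vnorm y / δ) * δ := by
            exact mul_le_mul_of_nonneg_right h1 hδ.le
        _ = vnorm y := div_mul_cancel₀ _ hδ.ne'
    · have h2 : vnorm y / δ < (2:ℝ) ^ ((k.toNat : ℤ) + 1) := by
        rwa [Int.toNat_of_nonneg hk0]
      have h2' : vnorm y / δ < (2:ℝ) ^ (k.toNat + 1) := by
        rw [show ((k.toNat : ℤ) + 1) = ((k.toNat + 1 : ℕ) : ℤ) from by push_cast; ring,
          zpow_natCast] at h2
        exact h2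
      calc vnorm y = (vnorm y / δ) * δ := (div_mul_cancel₀ _ hδ.ne').symm
        _ < (2:ℝ)^(k.toNat + 1) * δ := by
            exact mul_lt_mul_of_pos_right h2' hδ
  -- per-shell estimate
  have key : ∀ j : ℕ,
      (∫⁻ y in S j, ENNReal.ofReal (vnorm y ^ c₁ * |Ω y| * ∏ i, |f i (x - y i)|)) ≤
        ENNReal.ofReal (A * δ ^ (-ε) * q ^ j) * M := by
    intro j
    set a : ℝ := ((2:ℝ)^j * δ) ^ c₁ with ha
    set r : ℝ := (2:ℝ)^(j+1) * δ with hr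
    have hrpos : 0 < r := by positivity
    have hbase : 0 < (2:ℝ)^j * δ := by positivity
    have step1 : (∫⁻ y in S j,
        ENNReal.ofReal (vnorm y ^ c₁ * |Ω y| * ∏ i, |f i (x - y i)|)) ≤
        ENNReal.ofReal a * ∫⁻ y in S j, g y := by
      rw [← lintegral_const_mul' _ _ ENNReal.ofReal_ne_top]
      refine setLIntegral_mono' (hSmeas j) (fun y hy => ?_)
      have hv : (2:ℝ)^j * δ ≤ vnorm y := hy.1
      have hvp : vnorm y ^ c₁ ≤ a :=
        Real.rpow_le_rpow_of_nonpos hbase hv (by rw [hc1]; linarith)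
      rw [hg, ← ENNReal.ofReal_mul (by positivity)]
      refine ENNReal.ofReal_le_ofReal ?_
      rw [mul_assoc]
      exact mul_le_mul_of_nonneg_right hvp (by positivity)
    have step2 : (∫⁻ y in S j, g y) ≤ ∫⁻ y in {y : Fin m → En n | vnorm y < r}, g y := by
      refine lintegral_mono_set (fun y hy => ?_)
      exact hy.2
    have step3 : ENNReal.ofReal (r ^ (α + ε - (m * n : ℝ))) *
        (∫⁻ y in {y : Fin m → En n | vnorm y < r}, g y) ≤ M := by
      have := le_iSup₂ (f := fun (r : ℝ) (_ : 0 < r) =>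
        ENNReal.ofReal r ^ (α + ε - (m * n : ℝ)) *
          ∫⁻ y in {y : Fin m → En n | vnorm y < r},
            ENNReal.ofReal (|Ω y| * ∏ i, |f i (x - y i)|)) r hrpos
      rw [hM, MRmax]
      rw [ENNReal.ofReal_rpow_of_pos hrpos] at this
      exact this
    have step4 : (∫⁻ y in {y : Fin m → En n | vnorm y < r}, g y) ≤
        ENNReal.ofReal (r ^ c₂) * M := by
      have hpos : 0 < r ^ (α + ε - (m * n : ℝ)) := Real.rpow_pos_of_pos hrpos _
      have hne0 : ENNReal.ofReal (r ^ (α + ε - (m * n : ℝ))) ≠ 0 :=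
        (ENNReal.ofReal_pos.mpr hpos).ne'
      calc (∫⁻ y in {y : Fin m → En n | vnorm y < r}, g y)
          = (ENNReal.ofReal (r ^ (α + ε - (m * n : ℝ))))⁻¹ *
            (ENNReal.ofReal (r ^ (α + ε - (m * n : ℝ))) *
              ∫⁻ y in {y : Fin m → En n | vnorm y < r}, g y) := by
            rw [← mul_assoc, ENNReal.inv_mul_cancel hne0 ENNReal.ofReal_ne_top, one_mul]
        _ ≤ (ENNReal.ofReal (r ^ (α + ε - (m * n : ℝ))))⁻¹ * M :=
            mul_le_mul_right step3 _
        _ = ENNReal.ofReal (r ^ c₂) * M := by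
            rw [← ENNReal.ofReal_inv_of_pos hpos, ← Real.rpow_neg hrpos.le]
            congr 2
            rw [hc2]; ring
    have hreal : a * r ^ c₂ = A * δ ^ (-ε) * q ^ j := by
      have e1 : ((2:ℝ)^j)^c₁ * ((2:ℝ)^(j+1))^c₂ = A * q ^ j := by
        rw [← Real.rpow_natCast 2 j, ← Real.rpow_natCast 2 (j+1),
          ← Real.rpow_natCast q j, hqdef, ← Real.rpow_mul (by norm_num),
          ← Real.rpow_mul (by norm_num), ← Real.rpow_mul (by norm_num),
          hAdef, ← Real.rpow_add two_pos, ← Real.rpow_add two_pos]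
        congr 1
        rw [hc1, hc2]
        push_cast
        ring
      have e2 : δ ^ c₁ * δ ^ c₂ = δ ^ (-ε) := by
        rw [← Real.rpow_add hδ]
        congr 1
        rw [hc1, hc2]; ring
      calc a * r ^ c₂
          = ((2:ℝ)^j)^c₁ * ((2:ℝ)^(j+1))^c₂ * (δ ^ c₁ * δ ^ c₂) := by
            rw [ha, hr, Real.mul_rpow (by positivity) hδ.le,
              Real.mul_rpow (by positivity) hδ.le]
            ring
        _ = A * q ^ j * δ ^ (-ε) := by rw [e1, e2]
        _ = A * δ ^ (-ε) * q ^ j := by ring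
    calc (∫⁻ y in S j, ENNReal.ofReal (vnorm y ^ c₁ * |Ω y| * ∏ i, |f i (x - y i)|))
        ≤ ENNReal.ofReal a * ∫⁻ y in S j, g y := step1
      _ ≤ ENNReal.ofReal a * (ENNReal.ofReal (r ^ c₂) * M) :=
          mul_le_mul_right (step2.trans step4) _
      _ = ENNReal.ofReal (a * r ^ c₂) * M := by
          rw [ENNReal.ofReal_mul (by positivity), mul_assoc]
      _ = ENNReal.ofReal (A * δ ^ (-ε) * q ^ j) * M := by rw [hreal]
  -- sum the shells
  calc (∫⁻ y in {y : Fin m → En n | δ < vnorm y},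
        ENNReal.ofReal (vnorm y ^ c₁ * |Ω y| * ∏ i, |f i (x - y i)|))
      ≤ ∫⁻ y in ⋃ j, S j,
          ENNReal.ofReal (vnorm y ^ c₁ * |Ω y| * ∏ i, |f i (x - y i)|) :=
        lintegral_mono_set hsub
    _ ≤ ∑' j : ℕ, ∫⁻ y in S j,
          ENNReal.ofReal (vnorm y ^ c₁ * |Ω y| * ∏ i, |f i (x - y i)|) :=
        lintegral_iUnion_le _ _
    _ ≤ ∑' j : ℕ, ENNReal.ofReal (A * δ ^ (-ε) * q ^ j) * M :=
        ENNReal.tsum_le_tsum key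
    _ = (∑' j : ℕ, ENNReal.ofReal (A * δ ^ (-ε)) * ENNReal.ofReal q ^ j) * M := by
        rw [ENNReal.tsum_mul_right]
        congr 1
        refine tsum_congr (fun j => ?_)
        rw [ENNReal.ofReal_mul (by positivity), ← ENNReal.ofReal_pow hq0.le]
    _ = ENNReal.ofReal (A * δ ^ (-ε)) * (1 - ENNReal.ofReal q)⁻¹ * M := by
        rw [ENNReal.tsum_mul_left, ENNReal.tsum_geometric]
    _ = ENNReal.ofReal (A / (1 - q) * δ ^ (-ε)) * M := by
        congr 1
        have h1q : (1:ℝ≥0∞) - ENNReal.ofReal q = ENNReal.ofReal (1 - q) := by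
          rw [ENNReal.ofReal_sub 1 hq0.le, ENNReal.ofReal_one]
        rw [h1q, ← ENNReal.ofReal_inv_of_pos (by linarith),
          ← ENNReal.ofReal_mul (by positivity)]
        congr 1
        field_simp
end
end
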